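/- Let ℓ : (0,∞) → (0,∞) satisfy Condition L: for every function ε with ε(t) > 0 and ε(t) → 0 as t → ∞, log(t)·( ℓ((1+ε(t))t)/ℓ(t) − 1 ) → 0. Then the following stronger uniform statement holds: for every function ε with ε(t) > 0 and ε(t) → 0 as t → ∞, log(t) · sup_{ −ε(t) ≤ x ≤ ε(t) } | ℓ((1+x)t)/ℓ(t) − 1 | → 0 as t → ∞. -/

import Mathlib

open Filter

/-- Condition L implies its uniform version: if for every positive
function `ε(t) → 0` one has `log t · (ℓ((1+ε(t))t)/ℓ(t) - 1) → 0`, then also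
`log t · sup_{|x| ≤ ε(t)} |ℓ((1+x)t)/ℓ(t) - 1| → 0`. -/

lemma neg_aux
    (l : ℝ → ℝ)
    (hlpos : ∀ t : ℝ, 0 < t → 0 < l t)
    (hCondL : ∀ ε : ℝ → ℝ, (∀ t, 0 < ε t) → Tendsto ε atTop (nhds 0) →
      Tendsto (fun t : ℝ => Real.log t * (l ((1 + ε t) * t) / l t - 1))
        atTop (nhds 0))
    (y : ℝ → ℝ) (hy : ∀ t, y t ∈ Set.Icc (-(1/2) : ℝ) 0)
    (hy0 : Tendsto y atTop (nhds 0)) :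
    Tendsto (fun t : ℝ => Real.log t * (l ((1 + y t) * t) / l t - 1))
      atTop (nhds 0) := by
  set g : ℝ → ℝ := fun t => Real.log t * (l ((1 + y t) * t) / l t - 1) with hg
  by_contra hcon
  rw [Metric.tendsto_nhds] at hcon
  push_neg at hcon
  obtain ⟨δ, hδ, hfr⟩ := hcon
  simp only [not_eventually, not_lt, Real.dist_eq, sub_zero] at hfr
  have hfr' : ∀ M : ℝ, ∃ s, M ≤ s ∧ δ ≤ |g s| := by
    intro M
    obtain ⟨b, hb1, hb2⟩ := frequently_atTop.mp hfr M
    exact ⟨b, hb1, hb2⟩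
  choose f hf1 hf2 using hfr'
  set T : ℕ → ℝ := fun n =>
    Nat.rec (f 1) (fun n prev => f (max ((n : ℝ) + 2) (2 * ((1 + y prev) * prev) + 1))) n
    with hT
  set u : ℕ → ℝ := fun n => (1 + y (T n)) * T n with hu
  have hTsucc : ∀ n : ℕ, T (n + 1) = f (max ((n : ℝ) + 2) (2 * u n + 1)) := fun n => rfl
  have hT1 : ∀ n : ℕ, (n : ℝ) + 1 ≤ T n := by
    intro n
    cases n with
    | zero => exact (by norm_num : ((0:ℕ):ℝ) + 1 = 1).trans_le (hf1 1)
    | succ n =>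
      have := hf1 (max ((n : ℝ) + 2) (2 * u n + 1))
      have h2 : (n : ℝ) + 2 ≤ max ((n : ℝ) + 2) (2 * u n + 1) := le_max_left _ _
      rw [hTsucc]
      push_cast
      linarith
  have hTpos : ∀ n, (0:ℝ) < T n := fun n =>
    lt_of_lt_of_le (by positivity : (0:ℝ) < (n:ℝ) + 1) (hT1 n)
  have hT1' : ∀ n, (1:ℝ) ≤ T n := fun n => by
    have := hT1 n; have h0 : (0:ℝ) ≤ (n:ℝ) := Nat.cast_nonneg n; linarith
  have hTδ : ∀ n, δ ≤ |g (T n)| := by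
    intro n
    cases n with
    | zero => exact hf2 1
    | succ n => rw [hTsucc]; exact hf2 _
  have hyhalf : ∀ n, -(1/2 : ℝ) ≤ y (T n) := fun n => (hy (T n)).1
  have hyle : ∀ n, y (T n) ≤ 0 := fun n => (hy (T n)).2
  have h1y : ∀ n, (1/2 : ℝ) ≤ 1 + y (T n) := fun n => by linarith [hyhalf n]
  have h1ypos : ∀ n, (0:ℝ) < 1 + y (T n) := fun n => lt_of_lt_of_le (by norm_num) (h1y n)
  have hupos : ∀ n, 0 < u n := fun n => mul_pos (h1ypos n) (hTpos n)
  have huleT : ∀ n, u n ≤ T n := by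
    intro n
    simp only [hu]
    nlinarith [hTpos n, hyle n]
  have huge : ∀ n, T n / 2 ≤ u n := by
    intro n
    simp only [hu]
    nlinarith [hTpos n, h1y n]
  have humono : StrictMono u := by
    apply strictMono_nat_of_lt_succ
    intro n
    have h1 : 2 * u n + 1 ≤ T (n + 1) := by
      rw [hTsucc]
      exact le_trans (le_max_right _ _) (hf1 _)
    have h2 := huge (n + 1)
    linarith
  have hu_atTop : Tendsto u atTop atTop := by
    refine tendsto_atTop_mono (fun n => ?_)
      (tendsto_natCast_atTop_atTop.atTop_div_const (by norm_num : (0:ℝ) < 2))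
    calc ((n : ℝ)) / 2 ≤ T n / 2 := by linarith [hT1 n]
    _ ≤ u n := huge n
  have hT_atTop : Tendsto T atTop atTop :=
    tendsto_atTop_mono hT1 (tendsto_atTop_add_const_right atTop 1 tendsto_natCast_atTop_atTop)
  have hyneg : ∀ n, y (T n) < 0 := by
    intro n
    rcases lt_or_eq_of_le (hyle n) with h | h
    · exact h
    · exfalso
      have hz : g (T n) = 0 := by
        show Real.log (T n) * (l ((1 + y (T n)) * T n) / l (T n) - 1) = 0
        rw [h, add_zero, one_mul, div_self (hlpos (T n) (hTpos n)).ne', sub_self, mul_zero]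
      have hd := hTδ n
      rw [hz] at hd
      simp at hd
      linarith
  classical
  set η : ℝ → ℝ := fun s =>
    if h : ∃ n, u n = s then -(y (T h.choose)) / (1 + y (T h.choose)) else Real.exp (-s)
    with hη
  have hηun : ∀ n, η (u n) = -(y (T n)) / (1 + y (T n)) := by
    intro n
    have h : ∃ m, u m = u n := ⟨n, rfl⟩
    have hc : h.choose = n := humono.injective h.choose_spec
    simp only [hη, dif_pos h, hc]
  have hηpos : ∀ s, 0 < η s := by
    intro s
    simp only [hη]
    split
    · rename_i h
      exact div_pos (by linarith [hyneg h.choose]) (h1ypos h.choose)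
    · exact Real.exp_pos _
  have hyT0 : Tendsto (fun n => y (T n)) atTop (nhds 0) := hy0.comp hT_atTop
  have hden1 : Tendsto (fun n => 1 + y (T n)) atTop (nhds 1) := by
    have h := (tendsto_const_nhds : Tendsto (fun _ : ℕ => (1:ℝ)) atTop (nhds 1)).add hyT0
    simpa using h
  have hd0 : Tendsto (fun n => -(y (T n)) / (1 + y (T n))) atTop (nhds 0) := by
    have := (hyT0.neg).div hden1 one_ne_zero
    rw [neg_zero, zero_div] at this
    exact this
  have hη0 : Tendsto η atTop (nhds 0) := by
    rw [Metric.tendsto_nhds]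
    intro ε' hε'
    obtain ⟨N, hN⟩ := eventually_atTop.mp (hd0.eventually_lt_const hε')
    have h2 : ∀ᶠ s : ℝ in atTop, Real.exp (-s) < ε' :=
      Real.tendsto_exp_neg_atTop_nhds_zero.eventually_lt_const hε'
    filter_upwards [h2, eventually_gt_atTop (u N)] with s hs1 hs2
    rw [Real.dist_eq, sub_zero, abs_of_pos (hηpos s)]
    simp only [hη]
    split
    · rename_i h
      have hNlt : N < h.choose := by
        by_contra hle
        push_neg at hle
        have := humono.le_iff_le.mpr hle
        rw [h.choose_spec] at this
        linarith
      exact hN _ (le_of_lt hNlt)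
    · exact hs1
  have hG := hCondL η hηpos hη0
  have hGu : Tendsto (fun n => Real.log (u n) * (l ((1 + η (u n)) * u n) / l (u n) - 1))
      atTop (nhds 0) := hG.comp hu_atTop
  have harg : ∀ n, (1 + η (u n)) * u n = T n := by
    intro n
    rw [hηun n]
    simp only [hu]
    have h0 := (h1ypos n).ne'
    field_simp
    ring
  set A : ℕ → ℝ := fun n => Real.log (u n) with hA
  set R : ℕ → ℝ := fun n => l (T n) / l (u n) with hR
  have hGu' : Tendsto (fun n => A n * (R n - 1)) atTop (nhds 0) :=
    hGu.congr (fun n => by rw [harg n])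
  have hA_atTop : Tendsto A atTop atTop := Real.tendsto_log_atTop.comp hu_atTop
  have hRpos : ∀ n, 0 < R n := fun n => div_pos (hlpos _ (hTpos n)) (hlpos _ (hupos n))
  have habs : Tendsto (fun n => |A n * (R n - 1)|) atTop (nhds 0) := by
    simpa using hGu'.abs
  have hA1 : ∀ᶠ n : ℕ in atTop, 1 ≤ A n := hA_atTop.eventually_ge_atTop 1
  have hRm1abs : Tendsto (fun n => |R n - 1|) atTop (nhds 0) := by
    refine squeeze_zero' (Eventually.of_forall fun n => abs_nonneg _) ?_ habs
    filter_upwards [hA1] with n hn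
    rw [abs_mul]
    exact le_mul_of_one_le_left (abs_nonneg _) (le_trans hn (le_abs_self _))
  have hRhalf : ∀ᶠ n : ℕ in atTop, 1/2 ≤ R n := by
    filter_upwards [hRm1abs.eventually_lt_const (by norm_num : (0:ℝ) < 1/2)] with n hn
    have := abs_lt.mp hn
    linarith [this.1]
  have hkey : ∀ᶠ n : ℕ in atTop, δ ≤ 4 * |A n * (R n - 1)| := by
    filter_upwards [hA1, hRhalf] with n hA1n hRn
    have hgT : g (T n) = Real.log (T n) * (1 / R n - 1) := by
      have h0 : g (T n) = Real.log (T n) * (l (u n) / l (T n) - 1) := rfl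
      rw [h0]
      simp only [hR, one_div, inv_div]
    have hlogT : 0 ≤ Real.log (T n) := Real.log_nonneg (hT1' n)
    have hlogT2 : Real.log (T n) ≤ 2 * A n := by
      have h2u : T n ≤ 2 * u n := by linarith [huge n]
      have hlog := Real.log_le_log (hTpos n) h2u
      rw [Real.log_mul two_ne_zero (hupos n).ne'] at hlog
      have hl2 : Real.log 2 ≤ 1 := by
        have := Real.log_le_sub_one_of_pos (by norm_num : (0:ℝ) < 2)
        linarith
      simp only [hA] at hA1n ⊢
      linarith
    have h1Rn : |1 / R n - 1| = |R n - 1| / R n := by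
      have heq : 1 / R n - 1 = (1 - R n) / R n := by field_simp
      rw [heq, abs_div, abs_of_pos (hRpos n), abs_sub_comm]
    have hfinal : |g (T n)| ≤ 4 * |A n * (R n - 1)| := by
      rw [hgT, abs_mul, abs_of_nonneg hlogT, h1Rn, abs_mul]
      have hRle : |R n - 1| / R n ≤ 2 * |R n - 1| := by
        rw [div_le_iff₀ (hRpos n)]
        nlinarith [abs_nonneg (R n - 1)]
      have hAabs : A n ≤ |A n| := le_abs_self _
      nlinarith [abs_nonneg (R n - 1), abs_nonneg (A n)]
    linarith [hTδ n]
  have h4 : Tendsto (fun n => 4 * |A n * (R n - 1)|) atTop (nhds 0) := by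
    simpa using habs.const_mul 4
  obtain ⟨n, h1, h2⟩ := (hkey.and (h4.eventually_lt_const hδ)).exists
  linarith

lemma main_aux
    (l : ℝ → ℝ)
    (hlpos : ∀ t : ℝ, 0 < t → 0 < l t)
    (hCondL : ∀ ε : ℝ → ℝ, (∀ t, 0 < ε t) → Tendsto ε atTop (nhds 0) →
      Tendsto (fun t : ℝ => Real.log t * (l ((1 + ε t) * t) / l t - 1))
        atTop (nhds 0))
    (ε : ℝ → ℝ) (hεpos : ∀ t, 0 < ε t) (hε0 : Tendsto ε atTop (nhds 0))
    (x : ℝ → ℝ) (hx : ∀ t, |x t| ≤ ε t) :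
    Tendsto (fun t : ℝ => Real.log t * (l ((1 + x t) * t) / l t - 1))
      atTop (nhds 0) := by
  classical
  set εp : ℝ → ℝ := fun t => if 0 < x t then x t else ε t with hεp
  have hεppos : ∀ t, 0 < εp t := by
    intro t
    simp only [hεp]
    split
    · assumption
    · exact hεpos t
  have hεple : ∀ t, εp t ≤ ε t := by
    intro t
    simp only [hεp]
    split
    · exact le_trans (le_abs_self _) (hx t)
    · exact le_refl _
  have hεp0 : Tendsto εp atTop (nhds 0) :=
    squeeze_zero (fun t => (hεppos t).le) hεple hε0
  have hP := hCondL εp hεppos hεp0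
  set y : ℝ → ℝ := fun t => max (min (x t) 0) (-(1/2)) with hy
  have hymem : ∀ t, y t ∈ Set.Icc (-(1/2) : ℝ) 0 := by
    intro t
    constructor
    · exact le_max_right _ _
    · exact max_le (min_le_right _ _) (by norm_num)
  have hyabs : ∀ t, |y t| ≤ ε t := by
    intro t
    rw [abs_le]
    constructor
    · have h1 : -(ε t) ≤ min (x t) 0 :=
        le_min (neg_le_of_abs_le (hx t)) (by linarith [hεpos t])
      exact le_trans h1 (le_max_left _ _)
    · exact le_trans (hymem t).2 (hεpos t).le
  have hy0 : Tendsto y atTop (nhds 0) := by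
    rw [tendsto_zero_iff_abs_tendsto_zero]
    exact squeeze_zero (fun t => abs_nonneg _) hyabs hε0
  have hN := neg_aux l hlpos hCondL y hymem hy0
  -- combine
  rw [tendsto_zero_iff_abs_tendsto_zero]
  refine squeeze_zero' (g := fun t => |Real.log t * (l ((1 + εp t) * t) / l t - 1)| +
      |Real.log t * (l ((1 + y t) * t) / l t - 1)|)
    (Eventually.of_forall fun t => abs_nonneg _) ?_ ?_
  · filter_upwards [hε0.eventually_lt_const (by norm_num : (0:ℝ) < 1/2)] with t ht
    show |Real.log t * (l ((1 + x t) * t) / l t - 1)| ≤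
      |Real.log t * (l ((1 + εp t) * t) / l t - 1)| +
      |Real.log t * (l ((1 + y t) * t) / l t - 1)|
    by_cases hxt : 0 < x t
    · have h1 : εp t = x t := if_pos hxt
      rw [h1]
      exact le_add_of_nonneg_right (abs_nonneg _)
    · push_neg at hxt
      have h2 : y t = x t := by
        have hxge : -(ε t) ≤ x t := neg_le_of_abs_le (hx t)
        have : min (x t) 0 = x t := min_eq_left hxt
        simp only [hy, this]
        exact max_eq_left (by linarith)
      rw [h2]
      exact le_add_of_nonneg_left (abs_nonneg _)
  · have := (tendsto_zero_iff_abs_tendsto_zero _).mp hP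
    have h2 := (tendsto_zero_iff_abs_tendsto_zero _).mp hN
    simpa using this.add h2

theorem condition_L_uniform
    (l : ℝ → ℝ)
    (hlpos : ∀ t : ℝ, 0 < t → 0 < l t)
    (hCondL : ∀ ε : ℝ → ℝ, (∀ t, 0 < ε t) → Tendsto ε atTop (nhds 0) →
      Tendsto (fun t : ℝ => Real.log t * (l ((1 + ε t) * t) / l t - 1))
        atTop (nhds 0)) :
    ∀ ε : ℝ → ℝ, (∀ t, 0 < ε t) → Tendsto ε atTop (nhds 0) →
      Tendsto
        (fun t : ℝ =>
          Real.log t *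
            sSup ((fun x : ℝ => |l ((1 + x) * t) / l t - 1|) ''
              Set.Icc (-(ε t)) (ε t)))
        atTop (nhds 0) := by
  intro ε hεpos hε0
  classical
  have hIcc : ∀ t, (0:ℝ) ∈ Set.Icc (-(ε t)) (ε t) := fun t =>
    ⟨by linarith [hεpos t], (hεpos t).le⟩
  have hne : ∀ t : ℝ, ((fun x : ℝ => |l ((1 + x) * t) / l t - 1|) ''
      Set.Icc (-(ε t)) (ε t)).Nonempty := fun t => ⟨_, Set.mem_image_of_mem _ (hIcc t)⟩
  have hsel : ∀ t : ℝ, ∃ x : ℝ, x ∈ Set.Icc (-(ε t)) (ε t) ∧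
      sSup ((fun x : ℝ => |l ((1 + x) * t) / l t - 1|) '' Set.Icc (-(ε t)) (ε t)) ≤
        |l ((1 + x) * t) / l t - 1| + Real.exp (-t) := by
    intro t
    by_cases hbdd : BddAbove ((fun x : ℝ => |l ((1 + x) * t) / l t - 1|) ''
        Set.Icc (-(ε t)) (ε t))
    · set S := sSup ((fun x : ℝ => |l ((1 + x) * t) / l t - 1|) '' Set.Icc (-(ε t)) (ε t))
      have hlt : S - Real.exp (-t) < S := by
        have := Real.exp_pos (-t); linarith
      obtain ⟨a, ha, hlt2⟩ := exists_lt_of_lt_csSup (hne t) hlt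
      obtain ⟨x, hxmem, rfl⟩ := ha
      exact ⟨x, hxmem, by linarith⟩
    · rw [Real.sSup_of_not_bddAbove hbdd]
      exact ⟨0, hIcc t, by positivity⟩
  choose x hxmem hxS using hsel
  have hxabs : ∀ t, |x t| ≤ ε t := fun t => abs_le.mpr ⟨(hxmem t).1, (hxmem t).2⟩
  have hmain := main_aux l hlpos hCondL ε hεpos hε0 x hxabs
  have hS0 : ∀ t : ℝ, 0 ≤ sSup ((fun x : ℝ => |l ((1 + x) * t) / l t - 1|) ''
      Set.Icc (-(ε t)) (ε t)) := by
    intro t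
    by_cases hbdd : BddAbove ((fun x : ℝ => |l ((1 + x) * t) / l t - 1|) ''
        Set.Icc (-(ε t)) (ε t))
    · exact le_trans (abs_nonneg _) (le_csSup hbdd (Set.mem_image_of_mem _ (hIcc t)))
    · rw [Real.sSup_of_not_bddAbove hbdd]
  -- squeeze
  refine squeeze_zero' ?_ ?_ (g := fun t =>
    |Real.log t * (l ((1 + x t) * t) / l t - 1)| + Real.log t * Real.exp (-t)) ?_
  · filter_upwards [eventually_ge_atTop (1:ℝ)] with t ht
    exact mul_nonneg (Real.log_nonneg ht) (hS0 t)
  · filter_upwards [eventually_ge_atTop (1:ℝ)] with t ht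
    have hlog : 0 ≤ Real.log t := Real.log_nonneg ht
    calc Real.log t * sSup ((fun x : ℝ => |l ((1 + x) * t) / l t - 1|) ''
          Set.Icc (-(ε t)) (ε t))
        ≤ Real.log t * (|l ((1 + x t) * t) / l t - 1| + Real.exp (-t)) :=
          mul_le_mul_of_nonneg_left (hxS t) hlog
      _ = Real.log t * |l ((1 + x t) * t) / l t - 1| + Real.log t * Real.exp (-t) := by ring
      _ ≤ |Real.log t * (l ((1 + x t) * t) / l t - 1)| + Real.log t * Real.exp (-t) := by
          rw [abs_mul, abs_of_nonneg hlog]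
  · have h1 : Tendsto (fun t : ℝ => |Real.log t * (l ((1 + x t) * t) / l t - 1)|)
        atTop (nhds 0) := (tendsto_zero_iff_abs_tendsto_zero _).mp hmain
    have h2 : Tendsto (fun t : ℝ => Real.log t * Real.exp (-t)) atTop (nhds 0) := by
      refine squeeze_zero' ?_ ?_ (g := fun t : ℝ => t * Real.exp (-t)) ?_
      · filter_upwards [eventually_ge_atTop (1:ℝ)] with t ht
        exact mul_nonneg (Real.log_nonneg ht) (Real.exp_pos _).le
      · filter_upwards [eventually_gt_atTop (0:ℝ)] with t ht
        exact mul_le_mul_of_nonneg_right (Real.log_le_sub_one_of_pos ht |>.trans (by linarith))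
          (Real.exp_pos _).le
      · have := Real.tendsto_pow_mul_exp_neg_atTop_nhds_zero 1
        simpa using this
    simpa using h1.add h2
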